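/- Weak limits of stationary measures as the noise vanishes are invariant for the deterministic flow (Proposition 5.3): Suppose that for every compact set K ⊆ ℝ₊ⁿ there is a constant C₀ with ‖Ψ(t,y)‖ ≤ C₀ for all y ∈ K and t ≥ 0 (dissipativity-type uniform boundedness of forward orbits). Let σᵢ ≠ 0 with σᵢ → 0, and for each i let νᵢ be a Borel probability measure on ℝ₊ⁿ that is stationary for the transition probability function P^{σᵢ} with noise intensity σᵢ. If the family {νᵢ} is tight and νᵢ converges weakly to a Borel probability measure μ, then μ is invariant for the deterministic flow: for every T ≥ 0, the pushforward of μ under the map y ↦ Ψ(T,y) equals μ. -/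

import Mathlib

open Real Filter Topology MeasureTheory ProbabilityTheory intervalIntegral
open scoped NNReal ENNReal BoundedContinuousFunction


/-- Riemann sums of a continuous function converge to the interval integral. -/
lemma riemann_tendsto (u : ℝ → ℝ) {T : ℝ} (hT : 0 ≤ T)
    (hu : ContinuousOn u (Set.Icc 0 T)) :
    Tendsto (fun N : ℕ => (T / (N + 1)) * ∑ k ∈ Finset.range (N + 1), u (k * (T / (N + 1))))
      atTop (𝓝 (∫ s in (0:ℝ)..T, u s)) := by
  rw [Metric.tendsto_atTop]
  intro ε hε
  have hunif := (isCompact_Icc.uniformContinuousOn_of_continuous hu)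
  rw [Metric.uniformContinuousOn_iff] at hunif
  have hε' : 0 < ε / (T + 1) := by positivity
  obtain ⟨δ, hδ, hδ'⟩ := hunif (ε / (T + 1)) hε'
  obtain ⟨N₀, hN₀⟩ := exists_nat_gt (T / δ)
  refine ⟨N₀, fun N hN => ?_⟩
  set m : ℕ := N + 1 with hm
  have hmpos : (0:ℝ) < m := by positivity
  set h : ℝ := T / m with hh
  have hh0 : 0 ≤ h := by positivity
  have hhδ : h < δ := by
    rw [hh, div_lt_iff₀ hmpos]
    calc T < δ * N₀ := by rwa [← div_lt_iff₀' hδ]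
    _ ≤ δ * m := by
        apply mul_le_mul_of_nonneg_left _ hδ.le
        exact_mod_cast Nat.le_succ_of_le hN
  set t : ℕ → ℝ := fun k => k * h with ht
  have htmono : ∀ k l : ℕ, k ≤ l → t k ≤ t l := by
    intro k l hkl
    exact mul_le_mul_of_nonneg_right (by exact_mod_cast hkl) hh0
  have htmem : ∀ k : ℕ, k ≤ m → t k ∈ Set.Icc (0:ℝ) T := by
    intro k hk
    refine ⟨by positivity, ?_⟩
    have : t k ≤ t m := htmono k m hk
    simpa [ht, hh, mul_div_cancel₀ _ (ne_of_gt hmpos)] using this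
  have htm : t m = T := by
    simp [ht, hh, mul_div_cancel₀ _ (ne_of_gt hmpos)]
  have hint : ∀ k, k < m → IntervalIntegrable u MeasureTheory.volume (t k) (t (k+1)) := by
    intro k hk
    apply ContinuousOn.intervalIntegrable
    rw [Set.uIcc_of_le (htmono k (k+1) (Nat.le_succ k))]
    apply hu.mono
    intro x hx
    exact ⟨le_trans (htmem k hk.le).1 hx.1, le_trans hx.2 (htmem (k+1) hk).2⟩
  have hsplit : ∫ s in (0:ℝ)..T, u s = ∑ k ∈ Finset.range m, ∫ s in t k..t (k+1), u s := by
    rw [sum_integral_adjacent_intervals hint]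
    have h2 : (m:ℝ) * h = T := by rw [hh]; field_simp
    norm_num [ht, h2]
  have hconst : (T / m) * ∑ k ∈ Finset.range m, u (t k)
      = ∑ k ∈ Finset.range m, ∫ _ in t k..t (k+1), u (t k) := by
    rw [Finset.mul_sum]
    apply Finset.sum_congr rfl
    intro k _
    rw [intervalIntegral.integral_const]
    have : t (k+1) - t k = h := by push_cast [ht]; ring
    rw [this]
    simp [hh, mul_comm]
  rw [Real.dist_eq]
  have key : |(∫ s in (0:ℝ)..T, u s) - (T / m) * ∑ k ∈ Finset.range m, u (t k)|
      ≤ (ε / (T+1)) * T := by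
    rw [hsplit, hconst, ← Finset.sum_sub_distrib]
    calc |∑ k ∈ Finset.range m, ((∫ s in t k..t (k+1), u s) - ∫ _ in t k..t (k+1), u (t k))|
        ≤ ∑ k ∈ Finset.range m, |(∫ s in t k..t (k+1), u s) - ∫ _ in t k..t (k+1), u (t k)| :=
          Finset.abs_sum_le_sum_abs _ _
      _ ≤ ∑ k ∈ Finset.range m, (ε / (T+1)) * h := by
          apply Finset.sum_le_sum
          intro k hk
          rw [Finset.mem_range] at hk
          rw [← intervalIntegral.integral_sub (hint k hk) intervalIntegrable_const]
          have hb : ∀ x ∈ Set.uIoc (t k) (t (k+1)), ‖u x - u (t k)‖ ≤ ε / (T+1) := by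
            intro x hx
            rw [Set.uIoc_of_le (htmono k (k+1) (Nat.le_succ k))] at hx
            have hxm : x ∈ Set.Icc (0:ℝ) T := by
              constructor
              · exact le_trans (htmem k hk.le).1 hx.1.le
              · exact le_trans hx.2 (htmem (k+1) hk).2
            have hdist : dist x (t k) < δ := by
              rw [Real.dist_eq, abs_of_nonneg (sub_nonneg.mpr hx.1.le)]
              calc x - t k ≤ t (k+1) - t k := by linarith [hx.2]
                _ = h := by push_cast [ht]; ring
                _ < δ := hhδ
            exact le_of_lt (hδ' x hxm (t k) (htmem k hk.le) hdist)
          have := intervalIntegral.norm_integral_le_of_norm_le_const hb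
          calc |∫ s in t k..t (k+1), (u s - u (t k))| ≤ (ε/(T+1)) * |t (k+1) - t k| := this
            _ = (ε/(T+1)) * h := by
                congr 1
                rw [abs_of_nonneg]
                · push_cast [ht]; ring
                · rw [sub_nonneg]; exact htmono k (k+1) (Nat.le_succ k)
      _ = (ε / (T+1)) * T := by
          rw [Finset.sum_const, Finset.card_range, nsmul_eq_mul]
          rw [hh]; field_simp
  have hfin : (ε / (T+1)) * T < ε := by
    rw [div_mul_eq_mul_div, div_lt_iff₀ (by linarith)]
    nlinarith
  calc |(T / (N+1)) * ∑ k ∈ Finset.range (N+1), u (k * (T/(N+1))) - ∫ s in (0:ℝ)..T, u s|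
      = |(∫ s in (0:ℝ)..T, u s) - (T / m) * ∑ k ∈ Finset.range m, u (t k)| := by
        rw [abs_sub_comm]; norm_num [hm, ht, hh]
    _ ≤ (ε / (T+1)) * T := key
    _ < ε := hfin

lemma g_bounds (r : ℝ) (hr : 0 < r) (σ : ℝ) (b : ℝ → ℝ) (hb : Continuous b)
    {T M : ℝ} (hT : 0 ≤ T) (hM : 0 ≤ M) (hbM : ∀ s ∈ Set.Icc (0:ℝ) T, |b s| ≤ M) :
    ∀ t ∈ Set.Icc (0:ℝ) T,
      Real.exp (-(2*(|σ| * M))) ≤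
        Real.exp (r*t + σ*b t) / (1 + r * ∫ s in (0:ℝ)..t, Real.exp (r*s + σ*b s)) ∧
      Real.exp (r*t + σ*b t) / (1 + r * ∫ s in (0:ℝ)..t, Real.exp (r*s + σ*b s)) ≤
        Real.exp (2*(|σ| * M)) := by
  set ε : ℝ := |σ| * M with hεdef
  have hε : 0 ≤ ε := by positivity
  intro t ht
  set I : ℝ := ∫ s in (0:ℝ)..t, Real.exp (r*s + σ*b s) with hI
  have hbs : ∀ s ∈ Set.Icc (0:ℝ) t, |σ * b s| ≤ ε := by
    intro s hs
    rw [abs_mul]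
    exact mul_le_mul_of_nonneg_left (hbM s ⟨hs.1, hs.2.trans ht.2⟩) (abs_nonneg σ)
  have hexp : ∫ s in (0:ℝ)..t, Real.exp (r*s) = (Real.exp (r*t) - 1)/r := by
    rw [intervalIntegral.integral_comp_mul_left Real.exp hr.ne']
    rw [integral_exp]
    simp [smul_eq_mul]
    ring
  have hcont : Continuous (fun s => Real.exp (r*s + σ*b s)) := by fun_prop
  have hint1 : IntervalIntegrable (fun s => Real.exp (r*s + σ*b s)) volume 0 t :=
    hcont.intervalIntegrable 0 t
  have hintl : IntervalIntegrable (fun s => Real.exp (-ε) * Real.exp (r*s)) volume 0 t := by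
    apply Continuous.intervalIntegrable; fun_prop
  have hintu : IntervalIntegrable (fun s => Real.exp ε * Real.exp (r*s)) volume 0 t := by
    apply Continuous.intervalIntegrable; fun_prop
  have hIlow : Real.exp (-ε) * ((Real.exp (r*t) - 1)/r) ≤ I := by
    calc Real.exp (-ε) * ((Real.exp (r*t) - 1)/r)
        = ∫ s in (0:ℝ)..t, Real.exp (-ε) * Real.exp (r*s) := by
          rw [intervalIntegral.integral_const_mul, hexp]
      _ ≤ I := by
          apply intervalIntegral.integral_mono_on ht.1 hintl hint1
          intro s hs
          rw [← Real.exp_add]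
          apply Real.exp_le_exp.mpr
          have := abs_le.mp (hbs s hs)
          linarith
  have hIup : I ≤ Real.exp ε * ((Real.exp (r*t) - 1)/r) := by
    calc I ≤ ∫ s in (0:ℝ)..t, Real.exp ε * Real.exp (r*s) := by
          apply intervalIntegral.integral_mono_on ht.1 hint1 hintu
          intro s hs
          rw [← Real.exp_add]
          apply Real.exp_le_exp.mpr
          have := abs_le.mp (hbs s hs)
          linarith
      _ = Real.exp ε * ((Real.exp (r*t) - 1)/r) := by
          rw [intervalIntegral.integral_const_mul, hexp]
  have hIl' : Real.exp (-ε) * (Real.exp (r*t) - 1) ≤ r * I := by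
    have h := mul_le_mul_of_nonneg_left hIlow hr.le
    calc Real.exp (-ε) * (Real.exp (r*t) - 1)
        = r * (Real.exp (-ε) * ((Real.exp (r*t) - 1)/r)) := by field_simp
      _ ≤ r * I := h
  have hIu' : r * I ≤ Real.exp ε * (Real.exp (r*t) - 1) := by
    have h := mul_le_mul_of_nonneg_left hIup hr.le
    calc r * I ≤ r * (Real.exp ε * ((Real.exp (r*t) - 1)/r)) := h
      _ = Real.exp ε * (Real.exp (r*t) - 1) := by field_simp
  have he1 : Real.exp (-ε) ≤ 1 := Real.exp_le_one_iff.mpr (by linarith)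
  have he2 : 1 ≤ Real.exp ε := Real.one_le_exp hε
  have hDlow : Real.exp (-ε) * Real.exp (r*t) ≤ 1 + r * I := by nlinarith
  have hDup : 1 + r * I ≤ Real.exp ε * Real.exp (r*t) := by nlinarith
  have hDpos : 0 < 1 + r * I := lt_of_lt_of_le (by positivity) hDlow
  have hNlow : Real.exp (-ε) * Real.exp (r*t) ≤ Real.exp (r*t + σ*b t) := by
    rw [← Real.exp_add]
    apply Real.exp_le_exp.mpr
    have := abs_le.mp (hbs t ⟨ht.1, le_refl t⟩)
    linarith
  have hNup : Real.exp (r*t + σ*b t) ≤ Real.exp ε * Real.exp (r*t) := by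
    rw [← Real.exp_add]
    apply Real.exp_le_exp.mpr
    have := abs_le.mp (hbs t ⟨ht.1, le_refl t⟩)
    linarith
  constructor
  · rw [le_div_iff₀ hDpos]
    calc Real.exp (-(2*ε)) * (1 + r*I) ≤ Real.exp (-(2*ε)) * (Real.exp ε * Real.exp (r*t)) :=
          mul_le_mul_of_nonneg_left hDup (Real.exp_pos _).le
      _ = Real.exp (-ε) * Real.exp (r*t) := by
          rw [← Real.exp_add, ← Real.exp_add, ← Real.exp_add]
          congr 1
          ring
      _ ≤ Real.exp (r*t + σ*b t) := hNlow
  · rw [div_le_iff₀ hDpos]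
    calc Real.exp (r*t + σ*b t) ≤ Real.exp ε * Real.exp (r*t) := hNup
      _ = Real.exp (2*ε) * (Real.exp (-ε) * Real.exp (r*t)) := by
          rw [← Real.exp_add, ← Real.exp_add, ← Real.exp_add]
          congr 1
          ring
      _ ≤ Real.exp (2*ε) * (1 + r*I) := mul_le_mul_of_nonneg_left hDlow (Real.exp_pos _).le

lemma path_facts (r : ℝ) (hr : 0 < r) (σ : ℝ) (b : ℝ → ℝ) (hb : Continuous b)
    {T M : ℝ} (hT : 0 ≤ T) (hM : 0 ≤ M) (hbM : ∀ s ∈ Set.Icc (0:ℝ) T, |b s| ≤ M) :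
    ContinuousOn (fun t => Real.exp (r*t + σ*b t) /
        (1 + r * ∫ s in (0:ℝ)..t, Real.exp (r*s + σ*b s))) (Set.Icc 0 T) ∧
    T * Real.exp (-(2*(|σ| * M))) ≤ (∫ t in (0:ℝ)..T, Real.exp (r*t + σ*b t) /
        (1 + r * ∫ s in (0:ℝ)..t, Real.exp (r*s + σ*b s))) ∧
    (∫ t in (0:ℝ)..T, Real.exp (r*t + σ*b t) /
        (1 + r * ∫ s in (0:ℝ)..t, Real.exp (r*s + σ*b s))) ≤ T * Real.exp (2*(|σ| * M)) := by
  have hcont : Continuous (fun s => Real.exp (r*s + σ*b s)) := by fun_prop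
  have hprim : Continuous (fun t => ∫ s in (0:ℝ)..t, Real.exp (r*s + σ*b s)) :=
    intervalIntegral.continuous_primitive (fun a b => hcont.intervalIntegrable a b) 0
  have hden : Continuous (fun t => 1 + r * ∫ s in (0:ℝ)..t, Real.exp (r*s + σ*b s)) := by
    fun_prop
  have hdenpos : ∀ t ∈ Set.Icc (0:ℝ) T,
      0 < 1 + r * ∫ s in (0:ℝ)..t, Real.exp (r*s + σ*b s) := by
    intro t ht
    have h0 : 0 ≤ ∫ s in (0:ℝ)..t, Real.exp (r*s + σ*b s) :=
      intervalIntegral.integral_nonneg ht.1 (fun s _ => (Real.exp_pos _).le)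
    nlinarith
  have hGcont : ContinuousOn (fun t => Real.exp (r*t + σ*b t) /
      (1 + r * ∫ s in (0:ℝ)..t, Real.exp (r*s + σ*b s))) (Set.Icc 0 T) := by
    apply ContinuousOn.div (by fun_prop) hden.continuousOn
    intro t ht
    exact (hdenpos t ht).ne'
  refine ⟨hGcont, ?_, ?_⟩
  · calc T * Real.exp (-(2*(|σ| * M)))
        = ∫ _ in (0:ℝ)..T, Real.exp (-(2*(|σ| * M))) := by
          rw [intervalIntegral.integral_const, smul_eq_mul, sub_zero]
      _ ≤ _ := by
          apply intervalIntegral.integral_mono_on hT intervalIntegrable_const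
            (hGcont.intervalIntegrable_of_Icc hT)
          intro t ht
          exact (g_bounds r hr σ b hb hT hM hbM t ht).1
  · calc (∫ t in (0:ℝ)..T, Real.exp (r*t + σ*b t) /
        (1 + r * ∫ s in (0:ℝ)..t, Real.exp (r*s + σ*b s)))
        ≤ ∫ _ in (0:ℝ)..T, Real.exp (2*(|σ| * M)) := by
          apply intervalIntegral.integral_mono_on hT
            (hGcont.intervalIntegrable_of_Icc hT) intervalIntegrable_const
          intro t ht
          exact (g_bounds r hr σ b hb hT hM hbM t ht).2
      _ = T * Real.exp (2*(|σ| * M)) := by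
          rw [intervalIntegral.integral_const, smul_eq_mul, sub_zero]
lemma abs_integral_le {X : Type*} [MeasurableSpace X] (m : MeasureTheory.Measure X) (u : X → ℝ) :
    |∫ x, u x ∂m| ≤ ∫ x, |u x| ∂m := by
  rw [← Real.norm_eq_abs]
  exact (MeasureTheory.norm_integral_le_integral_norm u).trans
    (le_of_eq (by simp [Real.norm_eq_abs]))


set_option maxHeartbeats 2000000 in
/-- **Weak limits of stationary measures as the noise vanishes are invariant for the
deterministic flow** (Proposition 5.3). Assume forward orbits of the deterministic
Lotka–Volterra semiflow `Ψ` are uniformly bounded on compact sets of the nonnegative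
orthant. If `νᵢ` are stationary measures for the stochastic systems with noise
intensities `σᵢ ≠ 0`, `σᵢ → 0`, the family `{νᵢ}` is tight, and `νᵢ → μ` weakly,
then `μ` is invariant for the deterministic semiflow: the pushforward of `μ` under
`y ↦ Ψ(T,y)` equals `μ` for every `T ≥ 0`. -/
theorem weak_limit_of_stationary_measures_is_flow_invariant
    {Ω : Type*} [MeasureSpace Ω] [IsProbabilityMeasure (ℙ : Measure Ω)]
    (n : ℕ) (r : ℝ) (hr : 0 < r)
    (a : Fin n → Fin n → ℝ)
    (Ψ : ℝ → (Fin n → ℝ) → Fin n → ℝ)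
    (hΨcont : ContinuousOn (fun p : ℝ × (Fin n → ℝ) => Ψ p.1 p.2)
      (Set.Ici 0 ×ˢ {y | ∀ i, 0 ≤ y i}))
    (hΨ0 : ∀ y : Fin n → ℝ, (∀ i, 0 ≤ y i) → Ψ 0 y = y)
    (hΨnn : ∀ t : ℝ, 0 ≤ t → ∀ y : Fin n → ℝ, (∀ i, 0 ≤ y i) → ∀ i, 0 ≤ Ψ t y i)
    (hΨ' : ∀ y : Fin n → ℝ, (∀ i, 0 ≤ y i) → ∀ t : ℝ, 0 ≤ t → ∀ i,
      HasDerivAt (fun t => Ψ t y i) (Ψ t y i * (r + ∑ j, a i j * Ψ t y j)) t)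
    -- dissipativity-type uniform boundedness of forward orbits on compact sets
    (hbdd : ∀ K : Set (Fin n → ℝ), IsCompact K → K ⊆ {y | ∀ i, 0 ≤ y i} →
      ∃ C₀ : ℝ, ∀ y ∈ K, ∀ t : ℝ, 0 ≤ t → ‖Ψ t y‖ ≤ C₀)
    (B : ℝ → Ω → ℝ)
    (hBmeas : ∀ t, Measurable (B t))
    (hB0 : ∀ᵐ ω ∂(ℙ : Measure Ω), B 0 ω = 0)
    (hBcont : ∀ᵐ ω ∂(ℙ : Measure Ω), Continuous fun t => B t ω)
    (hBindep : ∀ (m : ℕ) (t : Fin (m + 1) → ℝ), (∀ i, 0 ≤ t i) → Monotone t →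
      iIndepFun
        (fun (i : Fin m) ω => B (t i.succ) ω - B (t i.castSucc) ω) ℙ)
    (hBgauss : ∀ s t : ℝ, 0 ≤ s → s ≤ t →
      Measure.map (fun ω => B t ω - B s ω) ℙ = gaussianReal 0 (Real.toNNReal (t - s)))
    -- the σ-parametrized logistic and Lotka–Volterra solutions
    (g : ℝ → ℝ → Ω → ℝ)
    (hg : ∀ (σ t : ℝ) (ω : Ω), g σ t ω =
      Real.exp (r * t + σ * B t ω) /
        (1 + r * ∫ s in (0:ℝ)..t, Real.exp (r * s + σ * B s ω)))
    (Φ : ℝ → ℝ → Ω → (Fin n → ℝ) → Fin n → ℝ)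
    (hΦ : ∀ (σ t : ℝ) (ω : Ω) (y : Fin n → ℝ),
      Φ σ t ω y = g σ t ω • Ψ (∫ s in (0:ℝ)..t, g σ s ω) y)
    -- vanishing noise intensities and associated stationary measures
    (σseq : ℕ → ℝ) (hσne : ∀ i, σseq i ≠ 0) (hσ0 : Tendsto σseq atTop (𝓝 0))
    (ν : ℕ → Measure (Fin n → ℝ)) (hνprob : ∀ i, IsProbabilityMeasure (ν i))
    (hνorth : ∀ i, ν i {y : Fin n → ℝ | ∀ j, 0 ≤ y j} = 1)
    (hνstat : ∀ i, ∀ t : ℝ, 0 ≤ t → ∀ A : Set (Fin n → ℝ), MeasurableSet A →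
      ∫⁻ y, (ℙ : Measure Ω) {ω | Φ (σseq i) t ω y ∈ A} ∂(ν i) = ν i A)
    -- tightness and weak convergence to μ
    (htight : ∀ ε : ℝ, 0 < ε → ∃ K : Set (Fin n → ℝ), IsCompact K ∧
      ∀ i, ν i Kᶜ ≤ ENNReal.ofReal ε)
    (μ : Measure (Fin n → ℝ)) (hμprob : IsProbabilityMeasure μ)
    (hweak : ∀ f : (Fin n → ℝ) → ℝ, Continuous f → (∃ M : ℝ, ∀ x, |f x| ≤ M) →
      Tendsto (fun i => ∫ x, f x ∂(ν i)) atTop (𝓝 (∫ x, f x ∂μ))) :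
    ∀ T : ℝ, 0 ≤ T → ∀ A : Set (Fin n → ℝ), MeasurableSet A →
      μ ((fun y => Ψ T y) ⁻¹' A) = μ A := by
  classical
  intro T hT
  -- the nonnegative orthant
  set orth : Set (Fin n → ℝ) := {y | ∀ i, 0 ≤ y i} with horthdef
  have horthclosed : IsClosed orth := by
    have : orth = ⋂ i, {y : Fin n → ℝ | 0 ≤ y i} := by
      ext y; simp [horthdef, Set.mem_iInter]
    rw [this]
    exact isClosed_iInter fun i => isClosed_le continuous_const (continuous_apply i)
  have horthmeas : MeasurableSet orth := horthclosed.measurableSet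
  -- continuous retraction onto the orthant
  set pr : (Fin n → ℝ) → (Fin n → ℝ) := fun y i => max (y i) 0 with hprdef
  have hprcont : Continuous pr :=
    continuous_pi fun i => (continuous_apply i).max continuous_const
  have hprmem : ∀ y, pr y ∈ orth := fun y i => le_max_right _ _
  have hpr_id : ∀ y ∈ orth, pr y = y := by
    intro y hy; funext i; exact max_eq_left (hy i)
  -- globally continuous modification of the flow
  set Θ : ℝ → (Fin n → ℝ) → (Fin n → ℝ) := fun t y => Ψ (max t 0) (pr y) with hΘdef
  have hΘcont : Continuous (fun p : ℝ × (Fin n → ℝ) => Θ p.1 p.2) := by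
    exact hΨcont.comp_continuous
      (f := fun p : ℝ × (Fin n → ℝ) => ((max p.1 0, pr p.2) : ℝ × (Fin n → ℝ)))
      ((continuous_fst.max continuous_const).prodMk (hprcont.comp continuous_snd))
      (fun p => ⟨show (0:ℝ) ≤ max p.1 0 from le_max_right _ _, hprmem _⟩)
  have hΘeq : ∀ t : ℝ, 0 ≤ t → ∀ y ∈ orth, Θ t y = Ψ t y := by
    intro t ht y hy
    rw [hΘdef]; dsimp only
    rw [hpr_id y hy, max_eq_left ht]
  have hΘTcont : Continuous (fun y => Θ T y) :=
    hΘcont.comp (continuous_const.prodMk continuous_id)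
  -- ν i gives full mass to the orthant
  have hνorthc : ∀ i, ν i orthᶜ = 0 := by
    intro i
    have := hνprob i
    rw [prob_compl_eq_zero_iff horthmeas]
    exact hνorth i
  have horthae : ∀ i, ∀ᵐ y ∂(ν i), y ∈ orth := by
    intro i
    rw [ae_iff]
    exact hνorthc i
  -- time-change integrals
  set c : ℕ → Ω → ℝ := fun i ω => ∫ s in (0:ℝ)..T, g (σseq i) s ω with hcdef
  -- pointwise a.e. facts about the auxiliary logistic solutions
  have hae : ∀ᵐ ω ∂(ℙ : Measure Ω),
      (∀ σ : ℝ, ContinuousOn (fun s => g σ s ω) (Set.Icc 0 T)) ∧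
      (∀ i, 0 ≤ c i ω) ∧
      Tendsto (fun i => g (σseq i) T ω) atTop (𝓝 1) ∧
      Tendsto (fun i => c i ω) atTop (𝓝 T) := by
    filter_upwards [hBcont] with ω hbω
    obtain ⟨M0, hM0⟩ := isCompact_Icc.exists_bound_of_continuousOn
      (hbω.continuousOn : ContinuousOn (fun s => B s ω) (Set.Icc 0 T))
    set M := max M0 0 with hM
    have hMnn : (0:ℝ) ≤ M := le_max_right _ _
    have hbM : ∀ s ∈ Set.Icc (0:ℝ) T, |B s ω| ≤ M := fun s hs => by
      have := hM0 s hs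
      rw [Real.norm_eq_abs] at this
      exact this.trans (le_max_left _ _)
    have hgrw : ∀ σ : ℝ, (fun s => g σ s ω) = fun t => Real.exp (r*t + σ * B t ω) /
        (1 + r * ∫ s in (0:ℝ)..t, Real.exp (r*s + σ * B s ω)) :=
      fun σ => funext fun t => hg σ t ω
    have hPF := fun σ : ℝ => path_facts r hr σ (fun s => B s ω) hbω hT hMnn hbM
    have hcrw : ∀ i, c i ω = ∫ t in (0:ℝ)..T, Real.exp (r*t + σseq i * B t ω) /
        (1 + r * ∫ s in (0:ℝ)..t, Real.exp (r*s + σseq i * B s ω)) := by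
      intro i
      rw [hcdef]
      dsimp only
      rw [hgrw (σseq i)]
    have hε : Tendsto (fun i => |σseq i| * M) atTop (𝓝 0) := by
      have := (hσ0.abs).mul_const M
      simpa using this
    have hlo : Tendsto (fun i => Real.exp (-(2*(|σseq i| * M)))) atTop (𝓝 1) := by
      have h2 : Tendsto (fun i => -(2*(|σseq i| * M))) atTop (𝓝 0) := by
        have := (hε.const_mul 2).neg
        simpa using this
      have := (Real.continuous_exp.tendsto 0).comp h2
      simpa [Function.comp_def] using this
    have hhi : Tendsto (fun i => Real.exp (2*(|σseq i| * M))) atTop (𝓝 1) := by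
      have h2 : Tendsto (fun i => 2*(|σseq i| * M)) atTop (𝓝 0) := by
        have := hε.const_mul 2
        simpa using this
      have := (Real.continuous_exp.tendsto 0).comp h2
      simpa [Function.comp_def] using this
    refine ⟨?_, ?_, ?_, ?_⟩
    · intro σ
      rw [hgrw σ]
      exact (hPF σ).1
    · intro i
      rw [hcrw i]
      calc (0:ℝ) ≤ T * Real.exp (-(2*(|σseq i| * M))) := by positivity
        _ ≤ _ := (hPF (σseq i)).2.1
    · have hub := fun i => g_bounds r hr (σseq i) (fun s => B s ω) hbω hT hMnn hbM T
        (Set.right_mem_Icc.mpr hT)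
      apply tendsto_of_tendsto_of_tendsto_of_le_of_le hlo hhi
      · intro i
        dsimp only
        rw [hg (σseq i) T ω]
        exact (hub i).1
      · intro i
        dsimp only
        rw [hg (σseq i) T ω]
        exact (hub i).2
    · have hlo' : Tendsto (fun i => T * Real.exp (-(2*(|σseq i| * M)))) atTop (𝓝 T) := by
        have := hlo.const_mul T
        simpa using this
      have hhi' : Tendsto (fun i => T * Real.exp (2*(|σseq i| * M))) atTop (𝓝 T) := by
        have := hhi.const_mul T
        simpa using this
      apply tendsto_of_tendsto_of_tendsto_of_le_of_le hlo' hhi'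
      · intro i
        dsimp only
        rw [hcrw i]
        exact (hPF (σseq i)).2.1
      · intro i
        dsimp only
        rw [hcrw i]
        exact (hPF (σseq i)).2.2
  -- a.e. measurability of the coefficients
  have hgmeas : ∀ σ : ℝ, ∀ t ∈ Set.Icc (0:ℝ) T, AEMeasurable (fun ω => g σ t ω) ℙ := by
    intro σ t ht
    have hImeas : AEMeasurable (fun ω => ∫ s in (0:ℝ)..t, Real.exp (r*s + σ * B s ω)) ℙ := by
      apply aemeasurable_of_tendsto_metrizable_ae atTop
        (f := fun (N:ℕ) (ω:Ω) => (t/(N+1)) * ∑ k ∈ Finset.range (N+1),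
          Real.exp (r*((k:ℝ)*(t/(N+1))) + σ * B ((k:ℝ)*(t/(N+1))) ω))
      · intro N
        apply AEMeasurable.const_mul
        apply Finset.aemeasurable_fun_sum
        intro k _
        exact (Real.measurable_exp.comp
          (((hBmeas _).const_mul σ).const_add _)).aemeasurable
      · filter_upwards [hBcont] with ω hbω
        exact riemann_tendsto (fun s => Real.exp (r*s + σ * B s ω)) ht.1
          (Continuous.continuousOn (by fun_prop))
    have hgrw : (fun ω => g σ t ω) = fun ω => Real.exp (r*t + σ * B t ω) /
        (1 + r * ∫ s in (0:ℝ)..t, Real.exp (r*s + σ * B s ω)) :=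
      funext fun ω => hg σ t ω
    rw [hgrw]
    exact (Real.measurable_exp.comp
      (((hBmeas _).const_mul σ).const_add _)).aemeasurable.div
      (aemeasurable_const.add (hImeas.const_mul r))
  have hcmeas : ∀ i, AEMeasurable (c i) ℙ := by
    intro i
    have hnode : ∀ (N k : ℕ), k ∈ Finset.range (N+1) → ((k:ℝ)*(T/(N+1))) ∈ Set.Icc (0:ℝ) T := by
      intro N k hk
      rw [Finset.mem_range] at hk
      constructor
      · positivity
      · have h1 : (k:ℝ) ≤ (N:ℝ)+1 := by
          have : (k:ℝ) ≤ (N:ℝ) := by exact_mod_cast Nat.lt_succ_iff.mp hk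
          linarith
        calc (k:ℝ)*(T/(N+1)) ≤ ((N:ℝ)+1)*(T/(N+1)) :=
              mul_le_mul_of_nonneg_right h1 (by positivity)
          _ = T := by field_simp
    apply aemeasurable_of_tendsto_metrizable_ae atTop
      (f := fun (N:ℕ) (ω:Ω) => (T/(N+1)) * ∑ k ∈ Finset.range (N+1),
        g (σseq i) ((k:ℝ)*(T/(N+1))) ω)
    · intro N
      apply AEMeasurable.const_mul
      exact Finset.aemeasurable_fun_sum _ (fun k hk => hgmeas (σseq i) _ (hnode N k hk))
    · filter_upwards [hae] with ω hω
      exact riemann_tendsto (fun s => g (σseq i) s ω) hT (hω.1 (σseq i))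
  -- measurable versions
  have hγex : ∀ i, ∃ γi : Ω → ℝ, Measurable γi ∧ (fun ω => g (σseq i) T ω) =ᵐ[ℙ] γi :=
    fun i => ⟨(hgmeas (σseq i) T (Set.right_mem_Icc.mpr hT)).mk _,
      (hgmeas (σseq i) T (Set.right_mem_Icc.mpr hT)).measurable_mk,
      (hgmeas (σseq i) T (Set.right_mem_Icc.mpr hT)).ae_eq_mk⟩
  choose γ hγmeas hγae using hγex
  have hτex : ∀ i, ∃ τi : Ω → ℝ, Measurable τi ∧ (c i) =ᵐ[ℙ] τi :=
    fun i => ⟨(hcmeas i).mk _, (hcmeas i).measurable_mk, (hcmeas i).ae_eq_mk⟩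
  choose τ hτmeas hτae using hτex
  have haeγ : ∀ᵐ ω ∂(ℙ : Measure Ω),
      Tendsto (fun i => γ i ω) atTop (𝓝 1) ∧
      Tendsto (fun i => τ i ω) atTop (𝓝 T) := by
    filter_upwards [hae, MeasureTheory.ae_all_iff.mpr hγae, MeasureTheory.ae_all_iff.mpr hτae]
      with ω hω hγω hτω
    constructor
    · have := hω.2.2.1
      refine this.congr fun i => hγω i
    · have := hω.2.2.2
      refine this.congr fun i => hτω i
  -- the measurable stochastic flow
  set φ : ℕ → Ω → (Fin n → ℝ) → (Fin n → ℝ) := fun i ω y => γ i ω • Θ (τ i ω) y with hφdef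
  have hφmeas : ∀ i, Measurable (fun p : (Fin n → ℝ) × Ω => φ i p.2 p.1) := by
    intro i
    have h1 : Continuous (fun q : ℝ × (ℝ × (Fin n → ℝ)) => q.1 • Θ q.2.1 q.2.2) :=
      continuous_fst.smul (hΘcont.comp continuous_snd)
    have h2 : Measurable (fun p : (Fin n → ℝ) × Ω => ((γ i p.2, (τ i p.2, p.1)) :
        ℝ × (ℝ × (Fin n → ℝ)))) :=
      ((hγmeas i).comp measurable_snd).prodMk
        (((hτmeas i).comp measurable_snd).prodMk measurable_fst)
    exact h1.measurable.comp h2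
  have hφΦ : ∀ i, ∀ᵐ ω ∂(ℙ : Measure Ω), ∀ y ∈ orth, Φ (σseq i) T ω y = φ i ω y := by
    intro i
    filter_upwards [hae, hγae i, hτae i] with ω hω hγω hτω y hy
    rw [hΦ, hφdef]
    dsimp only
    rw [← hγω, ← hτω]
    congr 1
    rw [hΘeq _ (hω.2.1 i) y hy]
  -- stationarity for bounded continuous test functions
  have hkey : ∀ i (f : (Fin n → ℝ) → ℝ) (Mf : ℝ), Continuous f → (∀ x, |f x| ≤ Mf) →
      ∫ y, f y ∂(ν i) = ∫ y, (∫ ω, f (φ i ω y) ∂(ℙ : Measure Ω)) ∂(ν i) := by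
    intro i f Mf hfc hfM
    have := hνprob i
    have hmap : Measure.map (fun p : (Fin n → ℝ) × Ω => φ i p.2 p.1) ((ν i).prod ℙ) = ν i := by
      apply Measure.ext
      intro A hA
      rw [Measure.map_apply (hφmeas i) hA, Measure.prod_apply ((hφmeas i) hA)]
      rw [← hνstat i T hT A hA]
      apply lintegral_congr_ae
      filter_upwards [horthae i] with y hy
      apply measure_congr
      rw [Filter.eventuallyEq_set]
      filter_upwards [hφΦ i] with ω hω
      simp only [Set.mem_preimage, Set.mem_setOf_eq]
      rw [hω y hy]
    have hφint : Integrable (fun p : (Fin n → ℝ) × Ω => f (φ i p.2 p.1)) ((ν i).prod ℙ) := by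
      apply Integrable.mono' (integrable_const Mf)
      · exact (hfc.measurable.comp (hφmeas i)).aestronglyMeasurable
      · exact MeasureTheory.ae_of_all _ fun p => by
          simpa [Real.norm_eq_abs] using hfM _
    calc ∫ y, f y ∂(ν i)
        = ∫ z, f z ∂(Measure.map (fun p : (Fin n → ℝ) × Ω => φ i p.2 p.1)
            ((ν i).prod ℙ)) := by rw [hmap]
      _ = ∫ p, f (φ i p.2 p.1) ∂((ν i).prod ℙ) :=
          integral_map (hφmeas i).aemeasurable hfc.aestronglyMeasurable
      _ = ∫ y, ∫ ω, f (φ i ω y) ∂(ℙ : Measure Ω) ∂(ν i) :=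
          MeasureTheory.integral_prod _ hφint
  -- the main estimate
  have hmain : ∀ f : (Fin n → ℝ) → ℝ, Continuous f → (∃ M : ℝ, ∀ x, |f x| ≤ M) →
      ∫ y, f (Θ T y) ∂μ = ∫ y, f y ∂μ := by
    intro f hfc hfbdd
    obtain ⟨M₀, hM₀⟩ := hfbdd
    set M : ℝ := max M₀ 1 with hMdef
    have hM1 : (1:ℝ) ≤ M := le_max_right _ _
    have hMpos : (0:ℝ) < M := lt_of_lt_of_le one_pos hM1
    have hfM : ∀ x, |f x| ≤ M := fun x => (hM₀ x).trans (le_max_left _ _)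
    have hfΘc : Continuous (fun y => f (Θ T y)) := hfc.comp hΘTcont
    have h1 : Tendsto (fun i => ∫ y, f (Θ T y) ∂(ν i)) atTop (𝓝 (∫ y, f (Θ T y) ∂μ)) :=
      hweak _ hfΘc ⟨M, fun x => hfM _⟩
    have h2 : Tendsto (fun i => ∫ y, f y ∂(ν i)) atTop (𝓝 (∫ y, f y ∂μ)) :=
      hweak f hfc ⟨M, hfM⟩
    set H : ℕ → (Fin n → ℝ) → ℝ := fun i y => ∫ ω, f (φ i ω y) ∂(ℙ : Measure Ω) with hHdef
    have hHsm : ∀ i, StronglyMeasurable (H i) := fun i =>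
      (hfc.measurable.comp (hφmeas i)).stronglyMeasurable.integral_prod_right'
    have hHbd : ∀ i y, |H i y| ≤ M := by
      intro i y
      have h := MeasureTheory.norm_integral_le_of_norm_le_const (μ := (ℙ : Measure Ω))
        (C := M) (f := fun ω => f (φ i ω y))
        (MeasureTheory.ae_of_all _ fun ω => by simpa [Real.norm_eq_abs] using hfM _)
      simpa [Real.norm_eq_abs, measure_univ] using h
    have habs : ∀ u v : ℝ, |u - v| ≤ |u| + |v| := by
      intro u v
      have := abs_add_le u (-v)
      simpa [sub_eq_add_neg] using this
    have h3 : Tendsto (fun i => (∫ y, f y ∂(ν i)) - ∫ y, f (Θ T y) ∂(ν i)) atTop (𝓝 0) := by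
      rw [Metric.tendsto_nhds]
      intro ε hε
      obtain ⟨K₀, hK₀c, hK₀⟩ := htight (ε/(8*M)) (by positivity)
      set K : Set (Fin n → ℝ) := K₀ ∩ orth with hKdef
      have hKc : IsCompact K := hK₀c.inter_right horthclosed
      have hKorth : K ⊆ orth := Set.inter_subset_right
      have hKmeas : MeasurableSet K := hKc.isClosed.measurableSet
      obtain ⟨C₀, hC₀⟩ := hbdd K hKc hKorth
      set C : ℝ := max C₀ 0 with hCdef
      have hCnn : (0:ℝ) ≤ C := le_max_right _ _
      have hΘK : ∀ (t : ℝ) (y : Fin n → ℝ), y ∈ K → ‖Θ t y‖ ≤ C := by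
        intro t y hy
        rw [hΘdef]
        dsimp only
        rw [hpr_id y (hKorth hy)]
        exact (hC₀ y hy _ (le_max_right _ _)).trans (le_max_left _ _)
      set R : ℝ := 2*C + 1 with hRdef
      have hfu := (isCompact_closedBall (0 : Fin n → ℝ) R).uniformContinuousOn_of_continuous
        hfc.continuousOn
      rw [Metric.uniformContinuousOn_iff] at hfu
      obtain ⟨δ₀, hδ₀, hfδ⟩ := hfu (ε/4) (by positivity)
      have hΘu := ((isCompact_Icc (a := T-1) (b := T+1)).prod hKc).uniformContinuousOn_of_continuous
        hΘcont.continuousOn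
      rw [Metric.uniformContinuousOn_iff] at hΘu
      obtain ⟨δ₁, hδ₁, hΘδ⟩ := hΘu (δ₀/2) (by positivity)
      set α : ℝ := min 1 (δ₀/(2*(C+1))) with hαdef
      have hαpos : 0 < α := lt_min one_pos (by positivity)
      set β : ℝ := min 1 δ₁ with hβdef
      have hβpos : 0 < β := lt_min one_pos hδ₁
      have hγim : TendstoInMeasure (ℙ : Measure Ω) (fun i => γ i) atTop (fun _ => (1:ℝ)) :=
        MeasureTheory.tendstoInMeasure_of_tendsto_ae
          (fun i => (hγmeas i).aestronglyMeasurable)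
          (by filter_upwards [haeγ] with ω hω; exact hω.1)
      have hτim : TendstoInMeasure (ℙ : Measure Ω) (fun i => τ i) atTop (fun _ => T) :=
        MeasureTheory.tendstoInMeasure_of_tendsto_ae
          (fun i => (hτmeas i).aestronglyMeasurable)
          (by filter_upwards [haeγ] with ω hω; exact hω.2)
      have hofRpos : (0:ENNReal) < ENNReal.ofReal (ε/(16*M)) :=
        ENNReal.ofReal_pos.mpr (by positivity)
      have hγev : ∀ᶠ i in atTop,
          (ℙ : Measure Ω) {ω | α ≤ dist (γ i ω) 1} < ENNReal.ofReal (ε/(16*M)) :=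
        Filter.Tendsto.eventually_lt_const hofRpos (tendstoInMeasure_iff_dist.mp hγim α hαpos)
      have hτev : ∀ᶠ i in atTop,
          (ℙ : Measure Ω) {ω | β ≤ dist (τ i ω) T} < ENNReal.ofReal (ε/(16*M)) :=
        Filter.Tendsto.eventually_lt_const hofRpos (tendstoInMeasure_iff_dist.mp hτim β hβpos)
      filter_upwards [hγev, hτev] with i hγi hτi
      set Gb : Set Ω := {ω | α ≤ dist (γ i ω) 1} ∪ {ω | β ≤ dist (τ i ω) T} with hGbdef
      have hGbmeas : MeasurableSet Gb := by
        apply MeasurableSet.union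
        · exact measurableSet_le measurable_const ((hγmeas i).dist measurable_const)
        · exact measurableSet_le measurable_const ((hτmeas i).dist measurable_const)
      have hGbbd : ((ℙ : Measure Ω) Gb).toReal ≤ ε/(8*M) := by
        have h := (measure_union_le (μ := (ℙ : Measure Ω))
          {ω | α ≤ dist (γ i ω) 1} {ω | β ≤ dist (τ i ω) T}).trans
          (add_le_add hγi.le hτi.le)
        rw [← ENNReal.ofReal_add (by positivity) (by positivity)] at h
        have h16 : ε/(16*M) + ε/(16*M) = ε/(8*M) := by ring
        rw [h16] at h
        calc ((ℙ : Measure Ω) Gb).toReal ≤ (ENNReal.ofReal (ε/(8*M))).toReal :=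
              ENNReal.toReal_mono ENNReal.ofReal_ne_top h
          _ ≤ ε/(8*M) := le_of_eq (ENNReal.toReal_ofReal (by positivity))
      have hgood : ∀ ω, ω ∉ Gb → ∀ y ∈ K, |f (φ i ω y) - f (Θ T y)| ≤ ε/4 := by
        intro ω hω y hy
        simp only [hGbdef, Set.mem_union, Set.mem_setOf_eq, not_or, not_le] at hω
        obtain ⟨hγd, hτd⟩ := hω
        have hτ1 : |τ i ω - T| < β := by rwa [Real.dist_eq] at hτd
        have hτIcc : τ i ω ∈ Set.Icc (T-1) (T+1) := by
          have hβ1 : β ≤ 1 := min_le_left _ _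
          have := abs_lt.mp hτ1
          constructor <;> linarith [this.1, this.2]
        have hΘτ : ‖Θ (τ i ω) y - Θ T y‖ ≤ δ₀/2 := by
          have hp1 : ((τ i ω, y) : ℝ × (Fin n → ℝ)) ∈ Set.Icc (T-1) (T+1) ×ˢ K :=
            ⟨hτIcc, hy⟩
          have hp2 : ((T, y) : ℝ × (Fin n → ℝ)) ∈ Set.Icc (T-1) (T+1) ×ˢ K :=
            ⟨⟨by linarith, by linarith⟩, hy⟩
          have hd : dist ((τ i ω, y) : ℝ × (Fin n → ℝ)) ((T, y) : ℝ × (Fin n → ℝ)) < δ₁ := by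
            rw [Prod.dist_eq]
            simp only [dist_self]
            rw [max_eq_left dist_nonneg]
            exact lt_of_lt_of_le hτd (min_le_right _ _)
          have := hΘδ _ hp1 _ hp2 hd
          rw [dist_eq_norm] at this
          exact this.le
        have hγ1 : |γ i ω - 1| < α := by rwa [Real.dist_eq] at hγd
        have hφy : ‖φ i ω y - Θ T y‖ < δ₀ := by
          rw [hφdef]
          dsimp only
          have hsplit : γ i ω • Θ (τ i ω) y - Θ T y
              = (γ i ω - 1) • Θ (τ i ω) y + (Θ (τ i ω) y - Θ T y) := by
            rw [sub_smul, one_smul]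
            abel
          rw [hsplit]
          calc ‖(γ i ω - 1) • Θ (τ i ω) y + (Θ (τ i ω) y - Θ T y)‖
              ≤ ‖(γ i ω - 1) • Θ (τ i ω) y‖ + ‖Θ (τ i ω) y - Θ T y‖ := norm_add_le _ _
            _ = |γ i ω - 1| * ‖Θ (τ i ω) y‖ + ‖Θ (τ i ω) y - Θ T y‖ := by
                rw [norm_smul, Real.norm_eq_abs]
            _ ≤ (δ₀/(2*(C+1))) * C + δ₀/2 := by
                apply add_le_add _ hΘτ
                apply mul_le_mul (le_trans hγ1.le (min_le_right _ _)) (hΘK _ y hy)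
                  (norm_nonneg _) (by positivity)
            _ < δ₀ := by
                have hlt : (δ₀/(2*(C+1))) * C < δ₀/2 := by
                  rw [div_mul_eq_mul_div, div_lt_div_iff₀ (by positivity) (by positivity)]
                  nlinarith
                linarith
        have hγabs : |γ i ω| ≤ 2 := by
          have h1 : |γ i ω| ≤ |γ i ω - 1| + 1 := by
            have := abs_add_le (γ i ω - 1) 1
            simpa using this
          have hα1 : α ≤ 1 := min_le_left _ _
          linarith [hγ1]
        have hmem1 : φ i ω y ∈ Metric.closedBall (0 : Fin n → ℝ) R := by
          rw [Metric.mem_closedBall, dist_zero_right]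
          rw [hφdef]
          dsimp only
          calc ‖γ i ω • Θ (τ i ω) y‖ = |γ i ω| * ‖Θ (τ i ω) y‖ := by
                rw [norm_smul, Real.norm_eq_abs]
            _ ≤ 2 * C := mul_le_mul hγabs (hΘK _ y hy) (norm_nonneg _) (by norm_num)
            _ ≤ R := by rw [hRdef]; linarith
        have hmem2 : Θ T y ∈ Metric.closedBall (0 : Fin n → ℝ) R := by
          rw [Metric.mem_closedBall, dist_zero_right]
          exact (hΘK T y hy).trans (by rw [hRdef]; linarith)
        have := hfδ _ hmem1 _ hmem2 (by rwa [dist_eq_norm])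
        rw [Real.dist_eq] at this
        exact this.le
      have hωbd : ∀ y ∈ K, ∀ ω, |f (φ i ω y) - f (Θ T y)|
          ≤ ε/4 + Set.indicator Gb (fun _ => 2*M) ω := by
        intro y hy ω
        by_cases hω : ω ∈ Gb
        · rw [Set.indicator_of_mem hω]
          have h2M : |f (φ i ω y) - f (Θ T y)| ≤ 2*M := by
            calc |f (φ i ω y) - f (Θ T y)| ≤ |f (φ i ω y)| + |f (Θ T y)| := habs _ _
              _ ≤ M + M := add_le_add (hfM _) (hfM _)
              _ = 2*M := by ring
          linarith
        · rw [Set.indicator_of_notMem hω, add_zero]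
          exact hgood ω hω y hy
      have hinner : ∀ y ∈ K, |H i y - f (Θ T y)|
          ≤ ε/4 + 2*M*((ℙ : Measure Ω) Gb).toReal := by
        intro y hy
        have hφmeasy : Measurable (fun ω => φ i ω y) :=
          (hφmeas i).comp (measurable_const.prodMk measurable_id)
        have hintf : Integrable (fun ω => f (φ i ω y)) (ℙ : Measure Ω) := by
          apply Integrable.mono' (integrable_const M)
          · exact (hfc.measurable.comp hφmeasy).aestronglyMeasurable
          · exact MeasureTheory.ae_of_all _ fun ω => by
              simpa [Real.norm_eq_abs] using hfM _
        have heq : H i y - f (Θ T y) = ∫ ω, (f (φ i ω y) - f (Θ T y)) ∂(ℙ : Measure Ω) := by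
          rw [MeasureTheory.integral_sub hintf (integrable_const _),
            MeasureTheory.integral_const, probReal_univ]
          simp [hHdef]
        rw [heq]
        have hindint : Integrable (Set.indicator Gb (fun _ => 2*M)) (ℙ : Measure Ω) :=
          (integrable_const (2*M)).indicator hGbmeas
        calc |∫ ω, (f (φ i ω y) - f (Θ T y)) ∂(ℙ : Measure Ω)|
            ≤ ∫ ω, |f (φ i ω y) - f (Θ T y)| ∂(ℙ : Measure Ω) := by
              exact abs_integral_le _ _
          _ ≤ ∫ ω, (ε/4 + Set.indicator Gb (fun _ => 2*M) ω) ∂(ℙ : Measure Ω) := by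
              apply MeasureTheory.integral_mono (hintf.sub (integrable_const _)).abs
                ((integrable_const (ε/4)).add hindint)
              intro ω
              exact hωbd y hy ω
          _ = ε/4 + 2*M*((ℙ : Measure Ω) Gb).toReal := by
              rw [MeasureTheory.integral_add (integrable_const _) hindint,
                MeasureTheory.integral_const, probReal_univ,
                MeasureTheory.integral_indicator_const _ hGbmeas]
              simp [smul_eq_mul, measureReal_def]
              ring
      have hcompl : (((ν i)) Kᶜ).toReal ≤ ε/(8*M) := by
        have h1 : (ν i) Kᶜ ≤ (ν i) K₀ᶜ + (ν i) orthᶜ := by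
          rw [hKdef, Set.compl_inter]
          exact measure_union_le _ _
        rw [hνorthc i, add_zero] at h1
        have h2 := h1.trans (hK₀ i)
        calc ((ν i) Kᶜ).toReal ≤ (ENNReal.ofReal (ε/(8*M))).toReal :=
              ENNReal.toReal_mono ENNReal.ofReal_ne_top h2
          _ ≤ ε/(8*M) := le_of_eq (ENNReal.toReal_ofReal (by positivity))
      have hHint : Integrable (H i) (ν i) := by
        have := hνprob i
        apply Integrable.mono' (integrable_const M)
        · exact (hHsm i).aestronglyMeasurable
        · exact MeasureTheory.ae_of_all _ fun y => by
            simpa [Real.norm_eq_abs] using hHbd i y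
      have hfΘint : Integrable (fun y => f (Θ T y)) (ν i) := by
        have := hνprob i
        apply Integrable.mono' (integrable_const M)
        · exact hfΘc.aestronglyMeasurable
        · exact MeasureTheory.ae_of_all _ fun y => by
            simpa [Real.norm_eq_abs] using hfM _
      have hKcind : Integrable (Set.indicator Kᶜ (fun _ => 2*M)) (ν i) := by
        have := hνprob i
        exact (integrable_const (2*M)).indicator hKmeas.compl
      have hptw : ∀ y, |H i y - f (Θ T y)|
          ≤ (ε/4 + 2*M*((ℙ : Measure Ω) Gb).toReal) + Set.indicator Kᶜ (fun _ => 2*M) y := by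
        intro y
        by_cases hy : y ∈ K
        · rw [Set.indicator_of_notMem (by simpa using hy), add_zero]
          exact hinner y hy
        · rw [Set.indicator_of_mem (by simpa using hy)]
          have h2M : |H i y - f (Θ T y)| ≤ 2*M := by
            calc |H i y - f (Θ T y)| ≤ |H i y| + |f (Θ T y)| := habs _ _
              _ ≤ M + M := add_le_add (hHbd i y) (hfM _)
              _ = 2*M := by ring
          have hnn : (0:ℝ) ≤ ((ℙ : Measure Ω) Gb).toReal := ENNReal.toReal_nonneg
          nlinarith
      have houter : |(∫ y, f y ∂ν i) - ∫ y, f (Θ T y) ∂ν i|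
          ≤ (ε/4 + 2*M*((ℙ : Measure Ω) Gb).toReal) + 2*M*((ν i) Kᶜ).toReal := by
        have := hνprob i
        rw [hkey i f M hfc hfM]
        rw [← MeasureTheory.integral_sub hHint hfΘint]
        calc |∫ y, (H i y - f (Θ T y)) ∂ν i|
            ≤ ∫ y, |H i y - f (Θ T y)| ∂ν i := abs_integral_le _ _
          _ ≤ ∫ y, ((ε/4 + 2*M*((ℙ : Measure Ω) Gb).toReal)
                + Set.indicator Kᶜ (fun _ => 2*M) y) ∂ν i := by
              apply MeasureTheory.integral_mono (hHint.sub hfΘint).abs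
                ((integrable_const _).add hKcind)
              intro y
              exact hptw y
          _ = (ε/4 + 2*M*((ℙ : Measure Ω) Gb).toReal) + 2*M*((ν i) Kᶜ).toReal := by
              rw [MeasureTheory.integral_add (integrable_const _) hKcind,
                MeasureTheory.integral_const, probReal_univ,
                MeasureTheory.integral_indicator_const _ hKmeas.compl]
              simp [smul_eq_mul, measureReal_def]
              ring
      rw [Real.dist_eq, sub_zero]
      have hMne : M ≠ 0 := ne_of_gt hMpos
      have hfrac : 2*M*(ε/(8*M)) = ε/4 := by field_simp; ring
      calc |(∫ y, f y ∂ν i) - ∫ y, f (Θ T y) ∂ν i|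
          ≤ (ε/4 + 2*M*((ℙ : Measure Ω) Gb).toReal) + 2*M*((ν i) Kᶜ).toReal := houter
        _ ≤ (ε/4 + 2*M*(ε/(8*M))) + 2*M*(ε/(8*M)) := by
            apply add_le_add (add_le_add_right (mul_le_mul_of_nonneg_left hGbbd (by positivity)) _)
            exact mul_le_mul_of_nonneg_left hcompl (by positivity)
        _ = ε/4 + ε/4 + ε/4 := by rw [hfrac]
        _ < ε := by linarith
    have h4 := h2.sub h1
    have h5 := tendsto_nhds_unique h4 h3
    linarith [h5]
  -- invariance of μ under Θ T
  have hmapμ : Measure.map (fun y => Θ T y) μ = μ := by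
    haveI : IsProbabilityMeasure (Measure.map (fun y => Θ T y) μ) :=
      Measure.isProbabilityMeasure_map hΘTcont.measurable.aemeasurable
    apply MeasureTheory.ext_of_forall_lintegral_eq_of_IsFiniteMeasure
    intro f
    rw [lintegral_map (f.continuous.measurable.coe_nnreal_ennreal) hΘTcont.measurable]
    set C : ℝ := dist f 0 with hC
    have hfb : ∀ x, |((f x : ℝ≥0) : ℝ)| ≤ C := by
      intro x
      have h1 : dist (f x) ((0 : (Fin n → ℝ) →ᵇ ℝ≥0) x) ≤ C :=
        BoundedContinuousFunction.dist_coe_le_dist x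
      have h2 : dist (f x) ((0 : (Fin n → ℝ) →ᵇ ℝ≥0) x) = |((f x : ℝ≥0) : ℝ)| := by
        simp [NNReal.dist_eq]
      rw [← h2]
      exact h1
    have hfc : Continuous (fun x => ((f x : ℝ≥0) : ℝ)) :=
      NNReal.continuous_coe.comp f.continuous
    have hint1 : Integrable (fun x => ((f (Θ T x) : ℝ≥0) : ℝ)) μ := by
      apply Integrable.mono' (integrable_const C)
      · exact (hfc.comp hΘTcont).aestronglyMeasurable
      · exact MeasureTheory.ae_of_all _ fun x => by
          simpa [Real.norm_eq_abs] using hfb (Θ T x)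
    have hint2 : Integrable (fun x => ((f x : ℝ≥0) : ℝ)) μ := by
      apply Integrable.mono' (integrable_const C)
      · exact hfc.aestronglyMeasurable
      · exact MeasureTheory.ae_of_all _ fun x => by
          simpa [Real.norm_eq_abs] using hfb x
    have heq := hmain (fun x => ((f x : ℝ≥0) : ℝ)) hfc ⟨C, hfb⟩
    rw [MeasureTheory.lintegral_coe_eq_integral (fun x => f (Θ T x)) hint1,
      MeasureTheory.lintegral_coe_eq_integral (fun x => f x) hint2]
    rw [heq]
  -- μ gives full mass to the orthant
  have hμorth : μ orthᶜ = 0 := by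
    let Pν : ℕ → ProbabilityMeasure (Fin n → ℝ) := fun i => ⟨ν i, hνprob i⟩
    let Pμ : ProbabilityMeasure (Fin n → ℝ) := ⟨μ, hμprob⟩
    have htend : Tendsto Pν atTop (𝓝 Pμ) := by
      apply MeasureTheory.ProbabilityMeasure.tendsto_iff_forall_integral_tendsto.mpr
      intro f
      exact hweak f f.continuous ⟨‖f‖, fun x => by
        have := f.norm_coe_le_norm x
        simpa [Real.norm_eq_abs] using this⟩
    have hle := MeasureTheory.ProbabilityMeasure.le_liminf_measure_open_of_tendsto htend
      horthclosed.isOpen_compl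
    have hz : (Filter.liminf (fun i => (Pν i : Measure (Fin n → ℝ)) orthᶜ) atTop) = 0 := by
      have heq : (fun i => (Pν i : Measure (Fin n → ℝ)) orthᶜ) = fun _ => (0:ENNReal) :=
        funext fun i => hνorthc i
      rw [heq]
      simp
    exact le_antisymm (le_of_le_of_eq hle hz) zero_le
  -- conclusion
  intro A hA
  have heq1 : μ ((fun y => Ψ T y) ⁻¹' A) = μ ((fun y => Θ T y) ⁻¹' A) := by
    apply measure_congr
    rw [Filter.eventuallyEq_set]
    filter_upwards [(ae_iff).mpr hμorth] with y hy
    have hy' : y ∈ orth := by simpa using hy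
    simp only [Set.mem_preimage]
    rw [hΘeq T hT y hy']
  rw [heq1, ← Measure.map_apply hΘTcont.measurable hA, hmapμ]
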